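/- The composed linear order ≺ = ≺₂ ∘ ≺₁ on E(G₂ ∘ G₁) satisfies condition (Q₁): if e₁ → e₂ in the reachable order of G₂ ∘ G₁, then e₁ ≺ e₂. -/
import Mathlib


/-- A progressive graph: a directed (multi)graph with sources `s`, targets `t`, and
a distinguished boundary set `σ` of vertices. -/
structure PGraph where
  V : Type
  E : Type
  s : E → V
  t : E → V
  σ : Set V

namespace PGraph

variable (G : PGraph)

/-- One edge can be followed by another. -/
def step (e f : G.E) : Prop := G.t e = G.s f

/-- The reachable order: a directed path starts with `e₁` and ends with `e₂`. -/
def reach : G.E → G.E → Prop := Relation.ReflTransGen G.step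

/-- No directed cycles. -/
def Acyclic : Prop := ∀ e, ¬ Relation.TransGen G.step e e

/-- Incoming edges of a vertex. -/
def I (v : G.V) : Set G.E := {e | G.t e = v}

/-- Outgoing edges of a vertex. -/
def O (v : G.V) : Set G.E := {e | G.s e = v}

/-- An input edge: it starts at a boundary vertex. -/
def InputEdge (e : G.E) : Prop := G.s e ∈ G.σ

/-- An output edge: it ends at a boundary vertex. -/
def OutputEdge (e : G.E) : Prop := G.t e ∈ G.σ

/-- An inner vertex. -/
def Inner (v : G.V) : Prop := v ∉ G.σ

/-- An input vertex: a boundary vertex which is a source. -/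
def InputVertex (v : G.V) : Prop := v ∈ G.σ ∧ ∃ e, G.s e = v

/-- An output vertex: a boundary vertex which is a sink. -/
def OutputVertex (v : G.V) : Prop := v ∈ G.σ ∧ ∃ e, G.t e = v

/-- The boundary consists of leaves: every boundary vertex has exactly one
incident edge-end. -/
def Progressive : Prop := ∀ v ∈ G.σ, ∃! e : G.E, G.s e = v ∨ G.t e = v

/-- The reflexive closure of a strict order on edges. -/
def le (lt : G.E → G.E → Prop) (a b : G.E) : Prop := lt a b ∨ a = b

/-- The convex hull of a set of edges with respect to a linear order `lt`. -/
def conv (lt : G.E → G.E → Prop) (X : Set G.E) : Set G.E :=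
  {y | ∃ a ∈ X, ∃ b ∈ X, G.le lt a y ∧ G.le lt y b}

/-- (Q₁): the reachable order implies the linear order. -/
def Q1 (lt : G.E → G.E → Prop) : Prop :=
  ∀ e₁ e₂, G.reach e₁ e₂ → G.le lt e₁ e₂

/-- (Q₂), the nesting condition. -/
def Q2 (lt : G.E → G.E → Prop) : Prop :=
  ∀ e₁ e e₂ : G.E, lt e₁ e → lt e e₂ →
    (G.t e₁ = G.t e₂ → G.I (G.t e) ⊆ G.conv lt (G.I (G.t e₁))) ∧
    (G.s e₁ = G.s e₂ → G.O (G.s e) ⊆ G.conv lt (G.O (G.s e₁))) ∧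
    (G.t e₁ = G.s e₂ →
      G.I (G.t e) ⊆ G.conv lt (G.I (G.t e₁)) ∨ G.O (G.s e) ⊆ G.conv lt (G.O (G.s e₂)))

/-- An upward planar order: a linear (strict total) order on edges satisfying
(Q₁) and the nesting condition (Q₂). -/
def UPO (lt : G.E → G.E → Prop) : Prop :=
  IsStrictTotalOrder G.E lt ∧ G.Q1 lt ∧ G.Q2 lt

/-- Admissibility: for every inner vertex `v`, input edges avoid `conv (O v)` and
output edges avoid `conv (I v)`. -/
def Admissible (lt : G.E → G.E → Prop) : Prop :=
  ∀ v : G.V, G.Inner v →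
    (∀ e, G.InputEdge e → e ∉ G.conv lt (G.O v)) ∧
    (∀ e, G.OutputEdge e → e ∉ G.conv lt (G.I v))

end PGraph

/-- Data exhibiting `G` as the composite `G₂ ∘ G₁` of two progressive graphs:
the edges of `G₁` and `G₂` embed into those of `G` via `j₁`, `j₂`, overlapping
exactly on the output edges of `G₁`, identified with the input edges of `G₂`;
the removed boundary vertices are the output vertices of `G₁` and the input
vertices of `G₂`, and the boundary of `G` is the union of the input vertices of
`G₁` and the output vertices of `G₂`. -/
structure CompData (G₁ G₂ G : PGraph) where
  j₁ : G₁.E → G.E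
  j₂ : G₂.E → G.E
  k₁ : G₁.V → G.V
  k₂ : G₂.V → G.V
  inj₁ : Function.Injective j₁
  inj₂ : Function.Injective j₂
  coverE : ∀ e : G.E, (∃ a, j₁ a = e) ∨ (∃ b, j₂ b = e)
  glue : ∀ a b, j₁ a = j₂ b → G₁.OutputEdge a ∧ G₂.InputEdge b
  glueOut : ∀ a, G₁.OutputEdge a → ∃ b, G₂.InputEdge b ∧ j₁ a = j₂ b
  glueIn : ∀ b, G₂.InputEdge b → ∃ a, G₁.OutputEdge a ∧ j₁ a = j₂ b
  src₁ : ∀ a, G.s (j₁ a) = k₁ (G₁.s a)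
  tgt₁ : ∀ a, ¬ G₁.OutputEdge a → G.t (j₁ a) = k₁ (G₁.t a)
  tgt₂ : ∀ b, G.t (j₂ b) = k₂ (G₂.t b)
  src₂ : ∀ b, ¬ G₂.InputEdge b → G.s (j₂ b) = k₂ (G₂.s b)
  injV₁ : ∀ v w, ¬ G₁.OutputVertex v → ¬ G₁.OutputVertex w → k₁ v = k₁ w → v = w
  injV₂ : ∀ v w, ¬ G₂.InputVertex v → ¬ G₂.InputVertex w → k₂ v = k₂ w → v = w
  disjV : ∀ v w, ¬ G₁.OutputVertex v → ¬ G₂.InputVertex w → k₁ v ≠ k₂ w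
  coverV : ∀ u : G.V,
    (∃ v, ¬ G₁.OutputVertex v ∧ k₁ v = u) ∨ (∃ w, ¬ G₂.InputVertex w ∧ k₂ w = u)
  bdry : ∀ u : G.V,
    u ∈ G.σ ↔ (∃ v, G₁.InputVertex v ∧ k₁ v = u) ∨ (∃ w, G₂.OutputVertex w ∧ k₂ w = u)

/-- `lt` is the shuffle-style composed linear order `lt₂ ∘ lt₁` on the edges of the
composite: it restricts to `lt₁` on `E(G₁)` and to `lt₂` on `E(G₂)`, and an
unidentified edge of `G₁` precedes an unidentified edge of `G₂` iff some identified
edge `ē = j₁ o = j₂ i` lies weakly between them. -/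
def IsCompOrder {G₁ G₂ G : PGraph} (C : CompData G₁ G₂ G)
    (lt₁ : G₁.E → G₁.E → Prop) (lt₂ : G₂.E → G₂.E → Prop)
    (lt : G.E → G.E → Prop) : Prop :=
  (∀ a a', lt₁ a a' ↔ lt (C.j₁ a) (C.j₁ a')) ∧
  (∀ b b', lt₂ b b' ↔ lt (C.j₂ b) (C.j₂ b')) ∧
  (∀ a b, (∀ b', C.j₁ a ≠ C.j₂ b') → (∀ a', C.j₂ b ≠ C.j₁ a') →
    (lt (C.j₁ a) (C.j₂ b) ↔
      ∃ o i, C.j₁ o = C.j₂ i ∧ G₁.le lt₁ a o ∧ G₂.le lt₂ i b))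

/-- The composed linear order satisfies (Q₁): reachability in `G₂ ∘ G₁` implies
the composed order. -/
theorem comp_Q1 (G₁ G₂ G : PGraph)
    [Fintype G₁.E] [Fintype G₂.E] [Fintype G.E]
    (lt₁ : G₁.E → G₁.E → Prop) (lt₂ : G₂.E → G₂.E → Prop) (lt : G.E → G.E → Prop)
    (hP₁ : G₁.Progressive) (hA₁ : G₁.Acyclic) (hU₁ : G₁.UPO lt₁) (hAd₁ : G₁.Admissible lt₁)
    (hP₂ : G₂.Progressive) (hA₂ : G₂.Acyclic) (hU₂ : G₂.UPO lt₂) (hAd₂ : G₂.Admissible lt₂)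
    (C : CompData G₁ G₂ G) (hst : IsStrictTotalOrder G.E lt)
    (hC : IsCompOrder C lt₁ lt₂ lt) :
    G.Q1 lt := by
  classical
  obtain ⟨hlt1, hlt2, -⟩ := hC
  -- a source vertex of G₁ is never an output vertex (else a loop, contradicting acyclicity)
  have notOut : ∀ a : G₁.E, ¬ G₁.OutputVertex (G₁.s a) := by
    rintro a ⟨hσ, e, he⟩
    obtain ⟨u, -, huniq⟩ := hP₁ _ hσ
    have h1 : e = u := huniq e (Or.inr he)
    have h2 : a = e := (huniq a (Or.inl rfl)).trans h1.symm
    exact hA₁ e (Relation.TransGen.single (show G₁.t e = G₁.s e from h2 ▸ he))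
  -- a target vertex of G₂ is never an input vertex
  have notIn : ∀ b : G₂.E, ¬ G₂.InputVertex (G₂.t b) := by
    rintro b ⟨hσ, e, he⟩
    obtain ⟨u, -, huniq⟩ := hP₂ _ hσ
    have h1 : e = u := huniq e (Or.inl he)
    have h2 : b = e := (huniq b (Or.inr rfl)).trans h1.symm
    exact hA₂ e (Relation.TransGen.single (show G₂.t e = G₂.s e from h2 ▸ he.symm))
  have le₁ : ∀ a a', G₁.le lt₁ a a' → G.le lt (C.j₁ a) (C.j₁ a') := by
    rintro a a' (h | rfl)
    · exact Or.inl ((hlt1 a a').mp h)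
    · exact Or.inr rfl
  have le₂ : ∀ b b', G₂.le lt₂ b b' → G.le lt (C.j₂ b) (C.j₂ b') := by
    rintro b b' (h | rfl)
    · exact Or.inl ((hlt2 b b').mp h)
    · exact Or.inr rfl
  have key : ∀ e f : G.E, G.step e f → G.le lt e f := by
    intro e f hef
    have norm_e : (∃ a, ¬ G₁.OutputEdge a ∧ C.j₁ a = e) ∨ (∃ b, C.j₂ b = e) := by
      rcases C.coverE e with ⟨a, ha⟩ | ⟨b, hb⟩
      · by_cases h : G₁.OutputEdge a
        · obtain ⟨b, -, hab⟩ := C.glueOut a h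
          exact Or.inr ⟨b, hab ▸ ha⟩
        · exact Or.inl ⟨a, h, ha⟩
      · exact Or.inr ⟨b, hb⟩
    have norm_f : (∃ a, C.j₁ a = f) ∨ (∃ b, ¬ G₂.InputEdge b ∧ C.j₂ b = f) := by
      rcases C.coverE f with ⟨a, ha⟩ | ⟨b, hb⟩
      · exact Or.inl ⟨a, ha⟩
      · by_cases h : G₂.InputEdge b
        · obtain ⟨a, -, hab⟩ := C.glueIn b h
          exact Or.inl ⟨a, hab ▸ hb⟩
        · exact Or.inr ⟨b, h, hb⟩
    rcases norm_e with ⟨a, hout, rfl⟩ | ⟨b, rfl⟩ <;>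
      rcases norm_f with ⟨a', rfl⟩ | ⟨b', hin, rfl⟩
    · -- both in G₁
      have hk : C.k₁ (G₁.t a) = C.k₁ (G₁.s a') := by
        rw [← C.tgt₁ a hout, ← C.src₁ a']; exact hef
      have hta : ¬ G₁.OutputVertex (G₁.t a) := fun h => hout h.1
      have hstep : G₁.step a a' := C.injV₁ _ _ hta (notOut a') hk
      exact le₁ a a' ((hU₁.2.1) a a' (Relation.ReflTransGen.single hstep))
    · -- e in G₁ (not output), f in G₂ (not input): impossible
      have hk : C.k₁ (G₁.t a) = C.k₂ (G₂.s b') := by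
        rw [← C.tgt₁ a hout, ← C.src₂ b' hin]; exact hef
      have hta : ¬ G₁.OutputVertex (G₁.t a) := fun h => hout h.1
      have hsb : ¬ G₂.InputVertex (G₂.s b') := fun h => hin h.1
      exact absurd hk (C.disjV _ _ hta hsb)
    · -- e in G₂, f in G₁: impossible
      have hk : C.k₁ (G₁.s a') = C.k₂ (G₂.t b) := by
        rw [← C.src₁ a', ← C.tgt₂ b]; exact hef.symm
      exact absurd hk (C.disjV _ _ (notOut a') (notIn b))
    · -- both in G₂
      have hk : C.k₂ (G₂.t b) = C.k₂ (G₂.s b') := by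
        rw [← C.tgt₂ b, ← C.src₂ b' hin]; exact hef
      have hsb : ¬ G₂.InputVertex (G₂.s b') := fun h => hin h.1
      have hstep : G₂.step b b' := C.injV₂ _ _ (notIn b) hsb hk
      exact le₂ b b' ((hU₂.2.1) b b' (Relation.ReflTransGen.single hstep))
  intro e₁ e₂ h
  induction h with
  | refl => exact Or.inr rfl
  | tail _ hstep ih =>
    rcases ih with h1 | rfl
    · rcases key _ _ hstep with h2 | rfl
      · exact Or.inl (hst.toIsStrictOrder.toIsTrans.trans _ _ _ h1 h2)
      · exact Or.inl h1
    · exact key _ _ hstep
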